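/- Let C be the code over F_{q^u} with parity check matrix A ⊗ B, where A and B are Hamming parity check matrices over F_{q^u} and F_q as in the extended Kronecker construction. For every vector x ∈ (F_{q^u})^{n_a n_b}, the distance d(x, C) equals the rank (over F_q) of the m_b × (u m_a) matrix μ_x obtained from the syndrome S_x = B [x] A^T by expanding each F_{q^u}-entry of its rows into u coordinates over F_q. -/

import Mathlib

open Matrix Kronecker

/-- H is a parity check matrix of a Hamming code: its columns are nonzero, pairwise
non-proportional, and represent all 1-dimensional subspaces of F^m. -/
def IsHammingPCM {F : Type*} [Field F] {m n : ℕ} (H : Matrix (Fin m) (Fin n) F) : Prop :=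
  (∀ j, (fun i => H i j) ≠ (0 : Fin m → F)) ∧
  (∀ j j' : Fin n, j ≠ j' → ∀ c : F, (fun i => H i j) ≠ c • (fun i => H i j')) ∧
  (∀ x : Fin m → F, x ≠ 0 → ∃ (j : Fin n) (c : F), x = c • (fun i => H i j))

section Aux

variable {u ma mb na nb : ℕ} {K L : Type} [Field K] [DecidableEq K]
  [Field L] [DecidableEq L] [Algebra K L]

/-- Expansion of a row vector over `L` into a row vector over `K` using a basis. -/
noncomputable def muMap (μ : Module.Basis (Fin u) K L) :
    (Fin ma → L) →ₗ[K] (Fin ma × Fin u → K) where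
  toFun y := fun jt => μ.repr (y jt.1) jt.2
  map_add' y z := by funext jt; simp
  map_smul' c y := by funext jt; simp

lemma muMap_injective (μ : Module.Basis (Fin u) K L) :
    Function.Injective (muMap (ma := ma) μ) := by
  intro y z h
  funext j
  apply μ.repr.injective
  ext t
  exact congrFun h (j, t)

/-- Entry formula for the syndrome matrix. -/
lemma synd_apply (A : Matrix (Fin ma) (Fin na) L) (B : Matrix (Fin mb) (Fin nb) K)
    (e : Fin na × Fin nb → L) (s : Fin mb) (t : Fin ma) :
    (B.map (algebraMap K L) * (Matrix.of fun (i : Fin nb) (j : Fin na) => e (j, i)) * Aᵀ) s t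
      = ∑ p : Fin na × Fin nb, algebraMap K L (B s p.2) * e p * A t p.1 := by
  simp only [Matrix.mul_apply, Matrix.transpose_apply, Matrix.of_apply, Matrix.map_apply,
    Fintype.sum_prod_type, Finset.sum_mul]

/-- The syndrome matrix entries agree with the Kronecker parity check applied to the vector. -/
lemma synd_eq_mulVec (A : Matrix (Fin ma) (Fin na) L) (B : Matrix (Fin mb) (Fin nb) K)
    (e : Fin na × Fin nb → L) (s : Fin mb) (t : Fin ma) :
    (B.map (algebraMap K L) * (Matrix.of fun (i : Fin nb) (j : Fin na) => e (j, i)) * Aᵀ) s t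
      = ((A ⊗ₖ B.map (algebraMap K L)).mulVec e) (t, s) := by
  rw [synd_apply]
  simp only [Matrix.mulVec, dotProduct, Matrix.kroneckerMap_apply, Matrix.map_apply]
  exact Finset.sum_congr rfl fun p _ => by ring

/-- Lower bound: the `K`-row-space of the syndrome of `e` has dimension at most the
Hamming weight of `e`. -/
lemma finrank_span_synd_le [FiniteDimensional K L]
    (A : Matrix (Fin ma) (Fin na) L) (B : Matrix (Fin mb) (Fin nb) K)
    (e : Fin na × Fin nb → L) :
    Module.finrank K (Submodule.span K (Set.range
      (B.map (algebraMap K L) * (Matrix.of fun (i : Fin nb) (j : Fin na) => e (j, i)) * Aᵀ)))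
      ≤ hammingNorm e := by
  classical
  set S := B.map (algebraMap K L) * (Matrix.of fun (i : Fin nb) (j : Fin na) => e (j, i)) * Aᵀ
    with hS
  set v : Fin na × Fin nb → (Fin ma → L) := fun p => fun t => e p * A t p.1 with hv
  set F : Finset (Fin na × Fin nb) := Finset.univ.filter (fun p => e p ≠ 0) with hF
  have hrow : ∀ s, S s ∈ Submodule.span K ((F.image v : Finset (Fin ma → L)) : Set (Fin ma → L)) := by
    intro s
    have hSs : S s = ∑ p : Fin na × Fin nb, B s p.2 • v p := by
      funext t
      rw [show S s t = _ from synd_apply A B e s t]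
      rw [Finset.sum_apply]
      exact Finset.sum_congr rfl fun p _ => by
        simp [hv, Algebra.smul_def, mul_assoc]
    rw [hSs]
    refine Submodule.sum_mem _ fun p _ => ?_
    by_cases hp : e p = 0
    · have : v p = 0 := by funext t; simp [hv, hp]
      rw [this, smul_zero]; exact Submodule.zero_mem _
    · exact Submodule.smul_mem _ _ (Submodule.subset_span (by
        simp only [Finset.coe_image, Set.mem_image, Finset.mem_coe]
        exact ⟨p, by simp [hF, hp], rfl⟩))
  have hle : Submodule.span K (Set.range S)
      ≤ Submodule.span K ((F.image v : Finset (Fin ma → L)) : Set (Fin ma → L)) := by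
    rw [Submodule.span_le]
    rintro _ ⟨s, rfl⟩
    exact hrow s
  calc Module.finrank K (Submodule.span K (Set.range S))
      ≤ Module.finrank K (Submodule.span K ((F.image v : Finset (Fin ma → L)) : Set (Fin ma → L))) :=
        Submodule.finrank_mono hle
    _ ≤ (F.image v).card := finrank_span_finset_le_card _
    _ ≤ F.card := Finset.card_image_le
    _ = hammingNorm e := rfl

/-- Upper bound: any matrix `S` is the syndrome of a vector of weight at most the
`K`-dimension of the row space of `S`. -/
lemma exists_synd_eq [FiniteDimensional K L]
    (A : Matrix (Fin ma) (Fin na) L) (hA : IsHammingPCM A)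
    (B : Matrix (Fin mb) (Fin nb) K) (hB : IsHammingPCM B)
    (S : Matrix (Fin mb) (Fin ma) L) :
    ∃ e : Fin na × Fin nb → L,
      (B.map (algebraMap K L) * (Matrix.of fun (i : Fin nb) (j : Fin na) => e (j, i)) * Aᵀ) = S ∧
      hammingNorm e ≤ Module.finrank K (Submodule.span K (Set.range S)) := by
  classical
  set V := Submodule.span K (Set.range S) with hV
  set r := Module.finrank K V with hr
  let b : Module.Basis (Fin r) K V := Module.finBasis K V
  let w : Fin mb → V := fun s => ⟨S s, Submodule.subset_span ⟨s, rfl⟩⟩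
  let lam : Fin mb → Fin r → K := fun s k => b.repr (w s) k
  have hsum : ∀ s, S s = ∑ k : Fin r, lam s k • ((b k : V) : Fin ma → L) := by
    intro s
    have h1 : (w s : Fin ma → L) = (((∑ k : Fin r, b.repr (w s) k • b k : V) : V) : Fin ma → L) := by
      rw [b.sum_repr (w s)]
    calc S s = (w s : Fin ma → L) := rfl
      _ = _ := by
        rw [h1]
        push_cast
        rfl
  have hlam : ∀ k : Fin r, (fun s => lam s k) ≠ (0 : Fin mb → K) := by
    intro k h0
    have hbk : ((b k : V) : Fin ma → L) ∈ Submodule.span K (Set.range S) := (b k).2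
    obtain ⟨g, hg⟩ := (Submodule.mem_span_range_iff_exists_fun K).1 hbk
    have hlift : (b k : V) = ∑ s : Fin mb, g s • w s := by
      apply Subtype.ext
      push_cast
      exact hg.symm
    let lmap : V →ₗ[K] K := (Finsupp.lapply k).comp (b.repr : V →ₗ[K] (Fin r →₀ K))
    have h2 : lmap (b k) = lmap (∑ s : Fin mb, g s • w s) := by rw [← hlift]
    have hl1 : lmap (b k) = 1 := by
      simp [lmap, Finsupp.lapply, b.repr_self]
    have hl2 : lmap (∑ s : Fin mb, g s • w s) = ∑ s : Fin mb, g s * lam s k := by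
      rw [map_sum]
      exact Finset.sum_congr rfl fun s _ => by
        rw [LinearMap.map_smul]; rfl
    rw [hl1, hl2] at h2
    have h3 : ∀ s : Fin mb, lam s k = 0 := fun s => congrFun h0 s
    simp only [h3, mul_zero, Finset.sum_const_zero] at h2
    exact one_ne_zero h2
  -- choose columns of B and A
  choose i c hci using fun k => hB.2.2 (fun s => lam s k) (hlam k)
  have hbknz : ∀ k : Fin r, ((b k : V) : Fin ma → L) ≠ 0 := by
    intro k hk
    exact b.ne_zero k (by
      apply Subtype.ext
      simpa using hk)
  choose j d hdj using fun k => hA.2.2 (fun t => (b k : V).1 t) (hbknz k)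
  set e0 : Fin na × Fin nb → L :=
    ∑ k : Fin r, Pi.single ((j k, i k) : Fin na × Fin nb) (algebraMap K L (c k) * d k) with he0
  refine ⟨e0, ?_, ?_⟩
  · ext s t
    rw [synd_apply A B e0 s t]
    have hterm : ∀ p : Fin na × Fin nb,
        algebraMap K L (B s p.2) * e0 p * A t p.1
        = ∑ k : Fin r, (if p = (j k, i k) then
            algebraMap K L (B s p.2) * (algebraMap K L (c k) * d k) * A t p.1 else 0) := by
      intro p
      rw [he0, Finset.sum_apply, Finset.mul_sum, Finset.sum_mul]
      refine Finset.sum_congr rfl fun k _ => ?_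
      by_cases hp : p = (j k, i k)
      · subst hp; simp
      · simp [Pi.single_apply, hp]
    rw [Finset.sum_congr rfl fun p _ => hterm p, Finset.sum_comm]
    have hin : ∀ k : Fin r,
        (∑ p : Fin na × Fin nb, if p = (j k, i k) then
          algebraMap K L (B s p.2) * (algebraMap K L (c k) * d k) * A t p.1 else 0)
        = algebraMap K L (B s (i k)) * (algebraMap K L (c k) * d k) * A t (j k) := by
      intro k
      rw [Finset.sum_ite_eq' Finset.univ ((j k, i k) : Fin na × Fin nb)]
      simp
    rw [Finset.sum_congr rfl fun k _ => hin k]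
    rw [show S s t = _ from congrFun (hsum s) t]
    rw [Finset.sum_apply]
    refine Finset.sum_congr rfl fun k _ => ?_
    have h1 : lam s k = c k * B s (i k) := by
      have := congrFun (hci k) s; simpa using this
    have h2 : (b k : V).1 t = d k * A t (j k) := by
      have := congrFun (hdj k) t; simpa using this
    rw [Pi.smul_apply, show ((b k : V) : Fin ma → L) t = (b k : V).1 t from rfl, h2, h1,
      Algebra.smul_def, _root_.map_mul]
    ring
  · unfold hammingNorm
    have hsub : ({p | e0 p ≠ 0} : Finset (Fin na × Fin nb))
        ⊆ Finset.univ.image (fun k : Fin r => ((j k, i k) : Fin na × Fin nb)) := by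
      intro p hp
      simp only [Finset.mem_filter, Finset.mem_univ, true_and] at hp
      by_contra hmem
      apply hp
      rw [he0, Finset.sum_apply]
      refine Finset.sum_eq_zero fun k _ => ?_
      have : p ≠ (j k, i k) := by
        intro h
        exact hmem (Finset.mem_image.2 ⟨k, Finset.mem_univ k, h.symm⟩)
      simp [Pi.single_apply, this]
    calc ({p | e0 p ≠ 0} : Finset (Fin na × Fin nb)).card
        ≤ (Finset.univ.image (fun k : Fin r => ((j k, i k) : Fin na × Fin nb))).card :=
          Finset.card_le_card hsub
      _ ≤ (Finset.univ : Finset (Fin r)).card := Finset.card_image_le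
      _ = r := by simp

/-- The rank of the `μ`-expanded syndrome equals the `K`-dimension of the row space. -/
lemma rank_mu_eq (μ : Module.Basis (Fin u) K L) (S : Matrix (Fin mb) (Fin ma) L) :
    (Matrix.of fun (s : Fin mb) (jt : Fin ma × Fin u) => μ.repr (S s jt.1) jt.2).rank
      = Module.finrank K (Submodule.span K (Set.range S)) := by
  classical
  rw [Matrix.rank_eq_finrank_span_row]
  have hN : Set.range (Matrix.of fun (s : Fin mb) (jt : Fin ma × Fin u) => μ.repr (S s jt.1) jt.2)
      = (muMap (ma := ma) μ) '' (Set.range S) := by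
    exact (Set.range_comp (muMap (ma := ma) μ) S)
  unfold Matrix.row
  rw [hN, ← Submodule.map_span]
  exact ((Submodule.equivMapOfInjective _ (muMap_injective μ) _).finrank_eq).symm

end Aux

/-- For the extended Kronecker code C with parity check matrix A ⊗ B,
the distance d(x,C) of any x equals the F_q-rank of the m_b × (u·m_a) matrix μ_x
obtained from the syndrome S_x = B [x] Aᵀ by expanding entries in a basis of F_{q^u}
over F_q. -/
theorem distance_eq_syndrome_rank
    {q u ma mb na nb : ℕ} (K L : Type) [Field K] [Fintype K] [DecidableEq K]
    [Field L] [Fintype L] [DecidableEq L] [Algebra K L]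
    (hq : Fintype.card K = q) (hL : Fintype.card L = q ^ u)
    (hu : 1 ≤ u) (hma : 2 ≤ ma) (hmb : 2 ≤ mb)
    (μ : Module.Basis (Fin u) K L)
    (A : Matrix (Fin ma) (Fin na) L) (hA : IsHammingPCM A)
    (B : Matrix (Fin mb) (Fin nb) K) (hB : IsHammingPCM B)
    (x : Fin na × Fin nb → L) :
    sInf {d : ℕ | ∃ c : Fin na × Fin nb → L,
        (A ⊗ₖ B.map (algebraMap K L)).mulVec c = 0 ∧ hammingDist x c = d} =
      (Matrix.of fun (s : Fin mb) (jt : Fin ma × Fin u) =>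
        μ.repr ((B.map (algebraMap K L) *
          (Matrix.of fun (i : Fin nb) (j : Fin na) => x (j, i)) * Aᵀ) s jt.1)
          jt.2).rank := by
  classical
  haveI : FiniteDimensional K L := Module.Finite.of_basis μ
  rw [rank_mu_eq μ]
  set S := B.map (algebraMap K L) *
    (Matrix.of fun (i : Fin nb) (j : Fin na) => x (j, i)) * Aᵀ with hSdef
  set r := Module.finrank K (Submodule.span K (Set.range S)) with hrdef
  -- linearity of the syndrome map
  have hsynd_sub : ∀ y z : Fin na × Fin nb → L, ∀ s t,
      (B.map (algebraMap K L) * (Matrix.of fun (i : Fin nb) (j : Fin na) => (y - z) (j, i)) * Aᵀ) s t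
      = (B.map (algebraMap K L) * (Matrix.of fun (i : Fin nb) (j : Fin na) => y (j, i)) * Aᵀ) s t
        - (B.map (algebraMap K L) * (Matrix.of fun (i : Fin nb) (j : Fin na) => z (j, i)) * Aᵀ) s t := by
    intro y z s t
    rw [synd_apply, synd_apply, synd_apply, ← Finset.sum_sub_distrib]
    exact Finset.sum_congr rfl fun p _ => by simp [mul_sub, sub_mul]
  obtain ⟨e, hse, hwe⟩ := exists_synd_eq A hA B hB S
  have hxe : (A ⊗ₖ B.map (algebraMap K L)).mulVec (x - e) = 0 := by
    funext p
    obtain ⟨t, s⟩ := p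
    rw [← synd_eq_mulVec]
    rw [hsynd_sub x e s t]
    rw [show (B.map (algebraMap K L) * (Matrix.of fun (i : Fin nb) (j : Fin na) => e (j, i)) * Aᵀ) = S from hse]
    simp [← hSdef]
  have hmem : hammingNorm e ∈ {d : ℕ | ∃ c : Fin na × Fin nb → L,
      (A ⊗ₖ B.map (algebraMap K L)).mulVec c = 0 ∧ hammingDist x c = d} := by
    refine ⟨x - e, hxe, ?_⟩
    rw [hammingDist_comm, hammingDist_eq_hammingNorm, neg_sub, sub_add_cancel]
  apply le_antisymm
  · exact le_trans (Nat.sInf_le hmem) hwe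
  · refine le_csInf ⟨_, hmem⟩ ?_
    rintro dd ⟨cc, hcc, rfl⟩
    have hsyndcc : ∀ s t,
        (B.map (algebraMap K L) * (Matrix.of fun (i : Fin nb) (j : Fin na) => cc (j, i)) * Aᵀ) s t = 0 := by
      intro s t
      rw [synd_eq_mulVec, hcc]
      rfl
    have heqS : (B.map (algebraMap K L) *
        (Matrix.of fun (i : Fin nb) (j : Fin na) => (x - cc) (j, i)) * Aᵀ) = S := by
      ext s t
      rw [hsynd_sub x cc s t, hsyndcc s t, sub_zero]
    have := finrank_span_synd_le A B (x - cc)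
    rw [heqS] at this
    rw [hammingDist_comm, hammingDist_eq_hammingNorm, neg_add_eq_sub]
    exact le_trans (le_of_eq hrdef) this
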